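/- For every sequence (P_m)_{m≥1} with P_m = P⁰ for m odd and P_m ∈ {P⁰, P¹} for m even, and for every m ≥ 0, the points 0 and −1 lie in distinct connected components of the interior of 𝒦_m. -/

import Mathlib

open Filter

/-- `P⁰(z) = z² − 1`. -/
def P0 : ℂ → ℂ := fun z => z ^ 2 - 1

/-- `P¹(z) = z³`. -/
def P1 : ℂ → ℂ := fun z => z ^ 3

/-- `Qcomp P m n z` is the value at `z` of the composition
`Q_{m,n} = P_n ∘ ⋯ ∘ P_{m+1}` (with `Q_{m,m} = id`). -/
def Qcomp (P : ℕ → ℂ → ℂ) (m n : ℕ) (z : ℂ) : ℂ :=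
  (List.range (n - m)).foldl (fun w k => P (m + k + 1) w) z

/-- Sequences with `P_m = P⁰` for odd `m` and `P_m ∈ {P⁰, P¹}` for even `m`. -/
def IsAdmissibleSeq (P : ℕ → ℂ → ℂ) : Prop :=
  ∀ m, 1 ≤ m → (Odd m → P m = P0) ∧ (Even m → P m = P0 ∨ P m = P1)

/-- The `m`-th iterated filled Julia set. -/
def filledJulia (P : ℕ → ℂ → ℂ) (m : ℕ) : Set ℂ :=
  {z | ∃ C : ℝ, ∀ n, m ≤ n → ‖Qcomp P m n z‖ ≤ C}

lemma Qcomp_self (P : ℕ → ℂ → ℂ) (m : ℕ) (z : ℂ) : Qcomp P m m z = z := by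
  simp [Qcomp]

lemma Qcomp_succ (P : ℕ → ℂ → ℂ) {m n : ℕ} (h : m ≤ n) (z : ℂ) :
    Qcomp P m (n + 1) z = P (n + 1) (Qcomp P m n z) := by
  unfold Qcomp
  have h1 : n + 1 - m = (n - m) + 1 := by omega
  rw [h1, List.range_succ, List.foldl_append]
  simp only [List.foldl_cons, List.foldl_nil]
  have h2 : m + (n - m) + 1 = n + 1 := by omega
  rw [h2]

lemma Qcomp_comp (P : ℕ → ℂ → ℂ) {m N n : ℕ} (h1 : m ≤ N) (h2 : N ≤ n) (z : ℂ) :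
    Qcomp P N n (Qcomp P m N z) = Qcomp P m n z := by
  induction n, h2 using Nat.le_induction with
  | base => rw [Qcomp_self]
  | succ n hn ih => rw [Qcomp_succ P hn, Qcomp_succ P (le_trans h1 hn), ih]

lemma admissible_cases {P : ℕ → ℂ → ℂ} (hP : IsAdmissibleSeq P) {k : ℕ} (hk : 1 ≤ k) :
    P k = P0 ∨ P k = P1 := by
  rcases Nat.even_or_odd k with he | ho
  · exact (hP k hk).2 he
  · exact Or.inl ((hP k hk).1 ho)

lemma Qcomp_diff {P : ℕ → ℂ → ℂ} (hP : IsAdmissibleSeq P) {m n : ℕ} (h : m ≤ n) :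
    Differentiable ℂ (fun z => Qcomp P m n z) := by
  induction n, h using Nat.le_induction with
  | base => simpa only [Qcomp_self] using differentiable_fun_id
  | succ n hn ih =>
    have hfun : (fun z => Qcomp P m (n + 1) z)
        = (fun w => P (n + 1) w) ∘ (fun z => Qcomp P m n z) := by
      funext z; exact Qcomp_succ P hn z
    rw [hfun]
    rcases admissible_cases hP (by omega : 1 ≤ n + 1) with hp | hp <;> rw [hp]
    · exact ((differentiable_pow 2).sub_const 1).comp ih
    · exact (differentiable_pow 3).comp ih

/-- On the filled Julia set, all iterates are bounded by 2. -/
lemma K_bound {P : ℕ → ℂ → ℂ} (hP : IsAdmissibleSeq P) (m : ℕ) {z : ℂ}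
    (hz : z ∈ filledJulia P m) : ∀ n, m ≤ n → ‖Qcomp P m n z‖ ≤ 2 := by
  obtain ⟨C, hC⟩ := hz
  by_contra hcon
  push_neg at hcon
  obtain ⟨n₀, hn₀, hgt⟩ := hcon
  have grow : ∀ j : ℕ, 2 * (3 / 2) ^ j ≤ ‖Qcomp P m (n₀ + j) z‖ := by
    intro j
    induction j with
    | zero => simpa using hgt.le
    | succ j ih =>
      have h2 : (2 : ℝ) ≤ ‖Qcomp P m (n₀ + j) z‖ := by
        refine le_trans ?_ ih
        have : (1 : ℝ) ≤ (3 / 2) ^ j := one_le_pow₀ (by norm_num)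
        nlinarith
      set u := Qcomp P m (n₀ + j) z with hu
      have hst : Qcomp P m (n₀ + j + 1) z = P (n₀ + j + 1) u :=
        Qcomp_succ P (by omega) z
      have hstep : (3 / 2) * ‖u‖ ≤ ‖P (n₀ + j + 1) u‖ := by
        rcases admissible_cases hP (by omega : 1 ≤ n₀ + j + 1) with hp | hp <;> rw [hp]
        · show (3 / 2) * ‖u‖ ≤ ‖u ^ 2 - 1‖
          have htr : ‖u ^ 2‖ ≤ ‖u ^ 2 - 1‖ + 1 := by
            calc ‖u ^ 2‖ = ‖(u ^ 2 - 1) + 1‖ := by ring_nf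
            _ ≤ ‖u ^ 2 - 1‖ + ‖1‖ := norm_add_le _ _
            _ = ‖u ^ 2 - 1‖ + 1 := by rw [norm_one]
          rw [norm_pow] at htr
          nlinarith [norm_nonneg u]
        · show (3 / 2) * ‖u‖ ≤ ‖u ^ 3‖
          rw [norm_pow]
          nlinarith [h2, mul_le_mul h2 h2 (by norm_num : (0:ℝ) ≤ 2) (norm_nonneg u)]
      calc 2 * (3 / 2) ^ (j + 1) = (3 / 2) * (2 * (3 / 2) ^ j) := by ring
      _ ≤ (3 / 2) * ‖u‖ := by nlinarith
      _ ≤ ‖Qcomp P m (n₀ + j + 1) z‖ := by rw [hst]; exact hstep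
  obtain ⟨j, hj⟩ := pow_unbounded_of_one_lt (C : ℝ) (by norm_num : (1 : ℝ) < 3 / 2)
  have h1 := hC (n₀ + j) (by omega)
  have h2 := grow j
  have : (3 / 2 : ℝ) ^ j ≤ 2 * (3 / 2) ^ j := by
    nlinarith [pow_pos (by norm_num : (0:ℝ) < 3/2) j]
  linarith

/-- The orbit of `{0, -1}` stays in `{0, -1}` and the two points stay distinct. -/
lemma cycle {P : ℕ → ℂ → ℂ} (hP : IsAdmissibleSeq P) (m : ℕ) :
    ∀ n, m ≤ n → (Qcomp P m n 0 = 0 ∧ Qcomp P m n (-1) = -1) ∨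
      (Qcomp P m n 0 = -1 ∧ Qcomp P m n (-1) = 0) := by
  intro n hn
  induction n, hn using Nat.le_induction with
  | base => left; exact ⟨Qcomp_self P m 0, Qcomp_self P m (-1)⟩
  | succ n hn ih =>
    rw [Qcomp_succ P hn, Qcomp_succ P hn]
    rcases admissible_cases hP (by omega : 1 ≤ n + 1) with hp | hp <;>
      rcases ih with ⟨ha, hb⟩ | ⟨ha, hb⟩ <;> rw [ha, hb, hp] <;>
      [right; left; left; right] <;> constructor <;> norm_num [P0, P1]

/-- Weight used in the Lyapunov function. -/
noncomputable def wt (s : ℕ → ℂ) (n : ℕ) : ℝ :=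
  if s n = 0 then 1 else if n % 2 = 0 then 3 else 12

lemma one_le_wt (s : ℕ → ℂ) (n : ℕ) : 1 ≤ wt s n := by
  unfold wt; split_ifs <;> norm_num

lemma wt_le (s : ℕ → ℂ) (n : ℕ) : wt s n ≤ 12 := by
  unfold wt; split_ifs <;> norm_num

/-- One-step contraction of the weighted distance to the shadow orbit. -/
lemma lyap {P : ℕ → ℂ → ℂ} (hP : IsAdmissibleSeq P) (s : ℕ → ℂ) {m n : ℕ} (hmn : m ≤ n)
    (hs : ∀ k, m ≤ k → s k = 0 ∨ s k = -1)
    (hrec : ∀ k, m ≤ k → s (k + 1) = P (k + 1) (s k))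
    (w : ℂ) (hw : wt s n * ‖w - s n‖ ≤ 3 / 40) :
    wt s (n + 1) * ‖P (n + 1) w - s (n + 1)‖ ≤
      (9 / 10) * (wt s n * ‖w - s n‖) := by
  have hd0 : (0 : ℝ) ≤ ‖w - s n‖ := norm_nonneg _
  have hs' := hrec n hmn
  rcases hs n hmn with h0 | h1
  · -- s n = 0
    have hwt : wt s n = 1 := by simp [wt, h0]
    set d := ‖w - s n‖ with hd
    have hdw : ‖w‖ = d := by rw [hd, h0, sub_zero]
    have hd40 : d ≤ 3 / 40 := by rw [hwt, one_mul] at hw; exact hw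
    rcases admissible_cases hP (by omega : 1 ≤ n + 1) with hp | hp
    · have hsn1 : s (n + 1) = -1 := by rw [hs', hp, h0]; norm_num [P0]
      have hval : ‖P (n + 1) w - s (n + 1)‖ = d ^ 2 := by
        rw [hp, hsn1]
        show ‖w ^ 2 - 1 - (-1)‖ = d ^ 2
        have he : w ^ 2 - 1 - (-1) = w ^ 2 := by ring
        rw [he, norm_pow, hdw]
      rw [hval, hwt, one_mul]
      have h12 : wt s (n + 1) ≤ 12 := wt_le s (n + 1)
      nlinarith [one_le_wt s (n + 1), sq_nonneg d,
        mul_le_mul_of_nonneg_right h12 (sq_nonneg d),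
        mul_le_mul_of_nonneg_right hd40 hd0]
    · have hsn1 : s (n + 1) = 0 := by rw [hs', hp, h0]; norm_num [P1]
      have hwt' : wt s (n + 1) = 1 := by simp [wt, hsn1]
      have hval : ‖P (n + 1) w - s (n + 1)‖ = d ^ 3 := by
        rw [hp, hsn1]
        show ‖w ^ 3 - 0‖ = d ^ 3
        rw [sub_zero, norm_pow, hdw]
      rw [hval, hwt, hwt', one_mul, one_mul]
      nlinarith [mul_le_mul_of_nonneg_right (mul_le_mul_of_nonneg_right hd40 hd0) hd0,
        mul_le_mul_of_nonneg_right hd40 hd0]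
  · -- s n = -1
    set d := ‖w - s n‖ with hd
    have hd1 : ‖w + 1‖ = d := by rw [hd, h1, sub_neg_eq_add]
    have hP0val : ‖P0 w - 0‖ ≤ d * (d + 2) := by
      have he : P0 w - 0 = (w + 1) * (w - 1) := by show w ^ 2 - 1 - 0 = _; ring
      rw [he, norm_mul, hd1]
      have h2 : ‖w - 1‖ ≤ d + 2 := by
        calc ‖w - 1‖ ≤ ‖w - (-1)‖ + ‖(-1) - 1‖ :=
          norm_sub_le_norm_sub_add_norm_sub w (-1) 1
        _ = d + 2 := by rw [sub_neg_eq_add, hd1]; norm_num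
      exact mul_le_mul_of_nonneg_left h2 hd0
    rcases Nat.even_or_odd n with hev | hod
    · -- n even : forced P0
      have hwt : wt s n = 3 := by
        unfold wt; rw [if_neg (by rw [h1]; norm_num), if_pos (Nat.even_iff.mp hev)]
      have hd40 : d ≤ 1 / 40 := by rw [hwt] at hw; linarith
      have hp : P (n + 1) = P0 := (hP (n + 1) (by omega)).1 (Even.add_one hev)
      have hsn1 : s (n + 1) = 0 := by rw [hs', hp, h1]; norm_num [P0]
      have hwt' : wt s (n + 1) = 1 := by simp [wt, hsn1]
      rw [hp, hwt', hwt, one_mul]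
      calc ‖P0 w - s (n + 1)‖ = ‖P0 w - 0‖ := by rw [hsn1]
      _ ≤ d * (d + 2) := hP0val
      _ ≤ 9 / 10 * (3 * d) := by nlinarith
    · -- n odd
      have hn2 : n % 2 = 1 := Nat.odd_iff.mp hod
      have hwt : wt s n = 12 := by
        unfold wt; rw [if_neg (by rw [h1]; norm_num), if_neg (by omega)]
      have hd40 : d ≤ 1 / 160 := by rw [hwt] at hw; linarith
      rcases admissible_cases hP (by omega : 1 ≤ n + 1) with hp | hp
      · have hsn1 : s (n + 1) = 0 := by rw [hs', hp, h1]; norm_num [P0]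
        have hwt' : wt s (n + 1) = 1 := by simp [wt, hsn1]
        rw [hp, hwt', hwt, one_mul]
        calc ‖P0 w - s (n + 1)‖ = ‖P0 w - 0‖ := by rw [hsn1]
        _ ≤ d * (d + 2) := hP0val
        _ ≤ 9 / 10 * (12 * d) := by
              nlinarith [mul_le_mul_of_nonneg_right hd40 hd0,
                mul_le_mul_of_nonneg_right (mul_le_mul_of_nonneg_right hd40 hd0) hd0]
      · have hsn1 : s (n + 1) = -1 := by rw [hs', hp, h1]; norm_num [P1]
        have hwt' : wt s (n + 1) = 3 := by
          unfold wt; rw [if_neg (by rw [hsn1]; norm_num), if_pos (by omega)]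
        have haw : ‖w‖ ≤ 1 + d := by
          calc ‖w‖ = ‖(w + 1) + (-1)‖ := by ring_nf
          _ ≤ ‖w + 1‖ + ‖-1‖ := norm_add_le _ _
          _ = d + 1 := by rw [hd1]; norm_num
          _ = 1 + d := by ring
        have hval : ‖P1 w - s (n + 1)‖ ≤ d * ((1 + d) ^ 2 + (1 + d) + 1) := by
          rw [hsn1]
          have he : P1 w - (-1) = (w + 1) * (w ^ 2 - w + 1) := by show w ^ 3 - (-1) = _; ring
          rw [he, norm_mul, hd1]
          have h3 : ‖w ^ 2 - w + 1‖ ≤ (1 + d) ^ 2 + (1 + d) + 1 := by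
            calc ‖w ^ 2 - w + 1‖
                ≤ ‖w ^ 2 - w‖ + ‖1‖ := norm_add_le _ _
            _ ≤ ‖w ^ 2‖ + ‖w‖ + 1 := by
                have := norm_sub_le_norm_sub_add_norm_sub (w ^ 2) 0 w
                simp only [sub_zero, zero_sub] at this
                rw [norm_neg] at this
                rw [norm_one]
                linarith
            _ ≤ (1 + d) ^ 2 + (1 + d) + 1 := by
                rw [norm_pow]
                have h4 : ‖w‖ ^ 2 ≤ (1 + d) ^ 2 := by
                  apply pow_le_pow_left₀ (norm_nonneg w) haw
                linarith
          exact mul_le_mul_of_nonneg_left h3 hd0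
        rw [hp, hwt', hwt]
        calc 3 * ‖P1 w - s (n + 1)‖ ≤ 3 * (d * ((1 + d) ^ 2 + (1 + d) + 1)) := by
              linarith
        _ ≤ 9 / 10 * (12 * d) := by
              nlinarith [mul_le_mul_of_nonneg_right hd40 hd0,
                mul_le_mul_of_nonneg_right (mul_le_mul_of_nonneg_right hd40 hd0) hd0]

/-- Geometric decay of the weighted distance along the orbit. -/
lemma basin {P : ℕ → ℂ → ℂ} (hP : IsAdmissibleSeq P) (s : ℕ → ℂ) {m N : ℕ} (hmN : m ≤ N)
    (hs : ∀ k, m ≤ k → s k = 0 ∨ s k = -1)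
    (hrec : ∀ k, m ≤ k → s (k + 1) = P (k + 1) (s k))
    (w : ℂ) (hw : ‖w - s N‖ ≤ 1 / 1000) :
    ∀ n, N ≤ n → wt s n * ‖Qcomp P N n w - s n‖ ≤ (9 / 10) ^ (n - N) * (3 / 40) := by
  intro n hn
  induction n, hn using Nat.le_induction with
  | base =>
    rw [Qcomp_self, Nat.sub_self, pow_zero, one_mul]
    calc wt s N * ‖w - s N‖ ≤ 12 * (1 / 1000) :=
      mul_le_mul (wt_le s N) hw (norm_nonneg _) (by norm_num)
    _ ≤ 3 / 40 := by norm_num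
  | succ n hn ih =>
    have hpow1 : ((9:ℝ) / 10) ^ (n - N) ≤ 1 := pow_le_one₀ (by norm_num) (by norm_num)
    have hle : wt s n * ‖Qcomp P N n w - s n‖ ≤ 3 / 40 := by
      calc _ ≤ (9 / 10 : ℝ) ^ (n - N) * (3 / 40) := ih
      _ ≤ 1 * (3 / 40) := by nlinarith
      _ = 3 / 40 := one_mul _
    have hstep := lyap hP s (le_trans hmN hn) hs hrec (Qcomp P N n w) hle
    rw [Qcomp_succ P hn]
    calc wt s (n + 1) * ‖P (n + 1) (Qcomp P N n w) - s (n + 1)‖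
        ≤ 9 / 10 * (wt s n * ‖Qcomp P N n w - s n‖) := hstep
    _ ≤ 9 / 10 * ((9 / 10) ^ (n - N) * (3 / 40)) := by nlinarith
    _ = (9 / 10) ^ (n + 1 - N) * (3 / 40) := by
        rw [show n + 1 - N = (n - N) + 1 from by omega, pow_succ]; ring

/-- Distance version of `basin`. -/
lemma basin' {P : ℕ → ℂ → ℂ} (hP : IsAdmissibleSeq P) (s : ℕ → ℂ) {m N : ℕ} (hmN : m ≤ N)
    (hs : ∀ k, m ≤ k → s k = 0 ∨ s k = -1)
    (hrec : ∀ k, m ≤ k → s (k + 1) = P (k + 1) (s k))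
    (w : ℂ) (hw : ‖w - s N‖ ≤ 1 / 1000) :
    ∀ n, N ≤ n → ‖Qcomp P N n w - s n‖ ≤ (9 / 10) ^ (n - N) * (3 / 40) := by
  intro n hn
  have h1 := basin hP s hmN hs hrec w hw n hn
  have h2 : ‖Qcomp P N n w - s n‖ ≤ wt s n * ‖Qcomp P N n w - s n‖ :=
    le_mul_of_one_le_left (norm_nonneg _) (one_le_wt s n)
  linarith

/-- Points `1/1000`-close to `0` or `-1` are in the filled Julia set. -/
lemma closedBall_subset_filledJulia {P : ℕ → ℂ → ℂ} (hP : IsAdmissibleSeq P) (m : ℕ)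
    (s : ℕ → ℂ)
    (hs : ∀ k, m ≤ k → s k = 0 ∨ s k = -1)
    (hrec : ∀ k, m ≤ k → s (k + 1) = P (k + 1) (s k))
    (w : ℂ) (hw : ‖w - s m‖ ≤ 1 / 1000) :
    w ∈ filledJulia P m := by
  refine ⟨2, fun n hn => ?_⟩
  have h1 := basin' hP s (le_refl m) hs hrec w hw n hn
  have hpow1 : ((9:ℝ) / 10) ^ (n - m) ≤ 1 := pow_le_one₀ (by norm_num) (by norm_num)
  have hsn : ‖s n‖ ≤ 1 := by
    rcases hs n hn with h | h <;> rw [h] <;> norm_num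
  calc ‖Qcomp P m n w‖
      ≤ ‖Qcomp P m n w - s n‖ + ‖s n‖ := by
        have := norm_sub_le_norm_sub_add_norm_sub (Qcomp P m n w) (s n) 0
        simpa using this
  _ ≤ (9 / 10) ^ (n - m) * (3 / 40) + 1 := by linarith
  _ ≤ 2 := by nlinarith
/-- For every admissible sequence and every `m ≥ 0`, the points `0` and `−1`
lie in distinct connected components of the interior of `𝒦_m`. -/
theorem zero_negOne_in_distinct_components
    (P : ℕ → ℂ → ℂ) (hP : IsAdmissibleSeq P) (m : ℕ) :
    (0 : ℂ) ∈ interior (filledJulia P m) ∧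
    (-1 : ℂ) ∈ interior (filledJulia P m) ∧
    connectedComponentIn (interior (filledJulia P m)) (0 : ℂ) ≠
      connectedComponentIn (interior (filledJulia P m)) (-1 : ℂ) := by
  -- the two shadow orbits
  set s : ℕ → ℂ := fun n => Qcomp P m n 0 with hs_def
  set t : ℕ → ℂ := fun n => Qcomp P m n (-1) with ht_def
  have hcyc := cycle hP m
  have hs : ∀ k, m ≤ k → s k = 0 ∨ s k = -1 := by
    intro k hk; rcases hcyc k hk with ⟨h, _⟩ | ⟨h, _⟩ <;> [left; right] <;> exact h
  have ht : ∀ k, m ≤ k → t k = 0 ∨ t k = -1 := by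
    intro k hk; rcases hcyc k hk with ⟨_, h⟩ | ⟨_, h⟩ <;> [right; left] <;> exact h
  have hsrec : ∀ k, m ≤ k → s (k + 1) = P (k + 1) (s k) := fun k hk => Qcomp_succ P hk 0
  have htrec : ∀ k, m ≤ k → t (k + 1) = P (k + 1) (t k) := fun k hk => Qcomp_succ P hk (-1)
  have hsm : s m = 0 := Qcomp_self P m 0
  have htm : t m = -1 := Qcomp_self P m (-1)
  -- interior membership
  have hsub0 : Metric.closedBall (0 : ℂ) (1 / 1000) ⊆ filledJulia P m := by
    intro w hw
    refine closedBall_subset_filledJulia hP m s hs hsrec w ?_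
    rw [hsm]
    simpa [Complex.dist_eq] using Metric.mem_closedBall.mp hw
  have hsub1 : Metric.closedBall (-1 : ℂ) (1 / 1000) ⊆ filledJulia P m := by
    intro w hw
    refine closedBall_subset_filledJulia hP m t ht htrec w ?_
    rw [htm]
    simpa [Complex.dist_eq] using Metric.mem_closedBall.mp hw
  have hmem0 : (0 : ℂ) ∈ interior (filledJulia P m) :=
    mem_interior_iff_mem_nhds.mpr
      (Filter.mem_of_superset (Metric.closedBall_mem_nhds _ (by norm_num)) hsub0)
  have hmem1 : (-1 : ℂ) ∈ interior (filledJulia P m) :=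
    mem_interior_iff_mem_nhds.mpr
      (Filter.mem_of_superset (Metric.closedBall_mem_nhds _ (by norm_num)) hsub1)
  refine ⟨hmem0, hmem1, ?_⟩
  intro hEq
  set V := interior (filledJulia P m) with hV_def
  set U := connectedComponentIn V 0 with hU_def
  have hUopen : IsOpen U := isOpen_interior.connectedComponentIn
  have hU0 : (0 : ℂ) ∈ U := mem_connectedComponentIn hmem0
  have hU1 : (-1 : ℂ) ∈ U := by
    rw [hEq]; exact mem_connectedComponentIn hmem1
  have hUV : U ⊆ V := connectedComponentIn_subset _ _
  have hUpre : IsPreconnected U := isPreconnected_connectedComponentIn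
  -- the attracted set
  set S : Set ℂ := {z | ∃ N, m ≤ N ∧ ‖Qcomp P m N z - s N‖ < 1 / 1000} with hS_def
  have hSopen : IsOpen S := by
    rw [isOpen_iff_mem_nhds]
    rintro z ⟨N, hN, hz⟩
    have hc : Continuous fun z => Qcomp P m N z := (Qcomp_diff hP hN).continuous
    have hpre : (fun z => Qcomp P m N z) ⁻¹' (Metric.ball (s N) (1 / 1000)) ∈ nhds z := by
      apply hc.continuousAt.preimage_mem_nhds
      apply Metric.isOpen_ball.mem_nhds
      simpa [Metric.mem_ball, Complex.dist_eq] using hz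
    refine Filter.mem_of_superset hpre (fun w hw => ⟨N, hN, ?_⟩)
    simpa [Metric.mem_ball, Complex.dist_eq] using hw
  -- uniform bound on U
  have hbound : ∀ w ∈ U, ∀ n, m ≤ n → ‖Qcomp P m n w‖ ≤ 2 := by
    intro w hw n hn
    exact K_bound hP m (interior_subset (hUV hw)) n hn
  -- U \ S is open
  have hOopen : IsOpen (U \ S) := by
    rw [isOpen_iff_mem_nhds]
    rintro z ⟨hzU, hzS⟩
    obtain ⟨ε, hε, hball⟩ := Metric.isOpen_iff.mp hUopen z hzU
    set ρ : ℝ := min ε (ε / 20000) with hρ_def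
    have hρpos : 0 < ρ := lt_min hε (by positivity)
    refine Filter.mem_of_superset (Metric.ball_mem_nhds z hρpos) ?_
    intro w' hw'
    have hw'U : w' ∈ U := hball (Metric.ball_subset_ball (min_le_left _ _) hw')
    refine ⟨hw'U, fun hw'S => ?_⟩
    -- Schwarz-type Lipschitz estimate on ball z ε
    have hlip : ∀ n, m ≤ n →
        dist (Qcomp P m n w') (Qcomp P m n z) ≤ 5 / ε * dist w' z := by
      intro n hn
      have hdiff : DifferentiableOn ℂ (fun z => Qcomp P m n z) (Metric.ball z ε) :=
        (Qcomp_diff hP hn).differentiableOn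
      have hmaps : Set.MapsTo (fun z => Qcomp P m n z) (Metric.ball z ε)
          (Metric.ball (Qcomp P m n z) 5) := by
        intro x hx
        have h1 : ‖Qcomp P m n x‖ ≤ 2 := hbound x (hball hx) n hn
        have h2 : ‖Qcomp P m n z‖ ≤ 2 := hbound z hzU n hn
        have : dist (Qcomp P m n x) (Qcomp P m n z) ≤ 4 := by
          rw [Complex.dist_eq]
          calc ‖Qcomp P m n x - Qcomp P m n z‖
              ≤ ‖Qcomp P m n x - 0‖ + ‖0 - Qcomp P m n z‖ :=
                norm_sub_le_norm_sub_add_norm_sub _ 0 _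
          _ ≤ 4 := by
              rw [sub_zero, zero_sub, norm_neg]
              linarith
        exact Metric.mem_ball.mpr (lt_of_le_of_lt this (by norm_num))
      exact Complex.dist_le_div_mul_dist_of_mapsTo_ball hdiff (hmaps.mono_right Metric.ball_subset_closedBall)
        (Metric.ball_subset_ball (min_le_left _ _) hw')
    have hclose : ∀ n, m ≤ n →
        dist (Qcomp P m n w') (Qcomp P m n z) ≤ 1 / 4000 := by
      intro n hn
      have h1 := hlip n hn
      have h2 : dist w' z < ρ := Metric.mem_ball.mp hw'
      have h3 : ρ ≤ ε / 20000 := min_le_right _ _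
      have h4 : 5 / ε * dist w' z ≤ 5 / ε * (ε / 20000) := by
        apply mul_le_mul_of_nonneg_left (le_trans h2.le h3) (by positivity)
      have h5 : 5 / ε * (ε / 20000) = 1 / 4000 := by field_simp; ring
      linarith
    -- w' ∈ S gives attraction, transfer to z, contradiction
    obtain ⟨N, hN, hlt⟩ := hw'S
    have hbase : ‖Qcomp P m N w' - s N‖ ≤ 1 / 1000 := hlt.le
    obtain ⟨k, hk⟩ := exists_pow_lt_of_lt_one (by norm_num : (0:ℝ) < 1 / 300)
      (by norm_num : (9:ℝ) / 10 < 1)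
    have hdecay := basin' hP s hN hs hsrec (Qcomp P m N w') hbase (N + k) (by omega)
    rw [Qcomp_comp P hN (by omega)] at hdecay
    have hsmall : ‖Qcomp P m (N + k) w' - s (N + k)‖ ≤ 1 / 4000 := by
      have : ((9:ℝ) / 10) ^ (N + k - N) * (3 / 40) ≤ 1 / 300 * (3 / 40) := by
        rw [show N + k - N = k from by omega]
        nlinarith [pow_nonneg (by norm_num : (0:ℝ) ≤ 9/10) k]
      calc ‖Qcomp P m (N + k) w' - s (N + k)‖
          ≤ (9 / 10) ^ (N + k - N) * (3 / 40) := hdecay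
      _ ≤ 1 / 300 * (3 / 40) := this
      _ ≤ 1 / 4000 := by norm_num
    apply hzS
    refine ⟨N + k, by omega, ?_⟩
    have hcl := hclose (N + k) (by omega)
    rw [Complex.dist_eq] at hcl
    calc ‖Qcomp P m (N + k) z - s (N + k)‖
        ≤ ‖Qcomp P m (N + k) z - Qcomp P m (N + k) w'‖
          + ‖Qcomp P m (N + k) w' - s (N + k)‖ :=
          norm_sub_le_norm_sub_add_norm_sub _ _ _
    _ ≤ 1 / 4000 + 1 / 4000 := by
        rw [show Qcomp P m (N + k) z - Qcomp P m (N + k) w'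
            = -(Qcomp P m (N + k) w' - Qcomp P m (N + k) z) from by ring,
          norm_neg]
        exact add_le_add hcl hsmall
    _ < 1 / 1000 := by norm_num
  -- connectedness contradiction
  have hsubUnion : U ⊆ S ∪ (U \ S) := fun x hx =>
    (em (x ∈ S)).elim Or.inl (fun h => Or.inr ⟨hx, h⟩)
  have hne1 : (U ∩ S).Nonempty := by
    refine ⟨0, hU0, m, le_refl m, ?_⟩
    rw [show Qcomp P m m (0:ℂ) = s m from rfl, hsm]
    norm_num
  have hnotS : (-1 : ℂ) ∉ S := by
    rintro ⟨N, hN, hlt⟩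
    have hone : ‖Qcomp P m N (-1) - s N‖ = 1 := by
      have hsN : s N = Qcomp P m N 0 := rfl
      rcases hcyc N hN with ⟨ha, hb⟩ | ⟨ha, hb⟩ <;> rw [hsN, hb, ha] <;> norm_num
    rw [hone] at hlt
    norm_num at hlt
  have hne2 : (U ∩ (U \ S)).Nonempty := ⟨-1, hU1, hU1, hnotS⟩
  obtain ⟨x, hxU, hxS, hxO⟩ := hUpre S (U \ S) hSopen hOopen hsubUnion hne1 hne2
  exact hxO.2 hxS
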